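/- Let n ≥ 1 and k ≥ 1, let z₀ ∈ ℂ, w ∈ ℂ, and let ζ ∈ ℂⁿ be nonzero. Define h : ℂ → ℂⁿ by h(z) = (w / (k! · ‖ζ‖²)) · (z − z₀)^k • ζ. Then: (i) ∂_z̄ h ≡ 0 on ℂ, and more generally every mixed Wirtinger derivative ∂_z^a ∂_z̄^b h with b ≥ 1 vanishes identically; (ii) (∂_z^a h)(z₀) = 0 for every a ≠ k, and (∂_z^k h)(z₀) = (w/‖ζ‖²) • ζ; (iii) consequently, for every finitely supported family of vectors q : ℕ × ℕ → ℂⁿ with q(k,0) = ζ, one has Σ_{(a,b)} ⟪q(a,b), (∂_z^a ∂_z̄^b h)(z₀)⟫ = w. In other words, h solves the constant-coefficient equation Q(∂_z, ∂_z̄) h (z₀) = w for any vector-valued polynomial differential operator Q whose coefficient of ∂_z^k is ζ. -/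

import Mathlib

/-- The real directional derivative of `f : ℂ → ℂⁿ` along `1` (the `x`-direction),
with `ℂ` regarded as a 2-dimensional real vector space. -/
noncomputable def dxDeriv (n : ℕ) (f : ℂ → EuclideanSpace ℂ (Fin n)) :
    ℂ → EuclideanSpace ℂ (Fin n) :=
  fun z => fderiv ℝ f z 1

/-- The real directional derivative of `f : ℂ → ℂⁿ` along `i` (the `y`-direction). -/
noncomputable def dyDeriv (n : ℕ) (f : ℂ → EuclideanSpace ℂ (Fin n)) :
    ℂ → EuclideanSpace ℂ (Fin n) :=
  fun z => fderiv ℝ f z Complex.I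

/-- The Wirtinger operator `∂_z = ½(∂_x - i ∂_y)`. -/
noncomputable def wirtingerZ (n : ℕ) (f : ℂ → EuclideanSpace ℂ (Fin n)) :
    ℂ → EuclideanSpace ℂ (Fin n) :=
  fun z => ((1 : ℂ) / 2) • (dxDeriv n f z - Complex.I • dyDeriv n f z)

/-- The Wirtinger operator `∂_z̄ = ½(∂_x + i ∂_y)`. -/
noncomputable def wirtingerZBar (n : ℕ) (f : ℂ → EuclideanSpace ℂ (Fin n)) :
    ℂ → EuclideanSpace ℂ (Fin n) :=
  fun z => ((1 : ℂ) / 2) • (dxDeriv n f z + Complex.I • dyDeriv n f z)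

/-- The mixed Wirtinger derivative `∂_z^a ∂_z̄^b f`. -/
noncomputable def wirtingerMixed (n : ℕ) (a b : ℕ) (f : ℂ → EuclideanSpace ℂ (Fin n)) :
    ℂ → EuclideanSpace ℂ (Fin n) :=
  (wirtingerZ n)^[a] ((wirtingerZBar n)^[b] f)

section auxLemmas

variable {n : ℕ}

lemma wirtinger_of_hasDerivAt {f : ℂ → EuclideanSpace ℂ (Fin n)} {z : ℂ}
    {d : EuclideanSpace ℂ (Fin n)} (hf : HasDerivAt f d z) :
    wirtingerZ n f z = d ∧ wirtingerZBar n f z = 0 := by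
  have hF : HasFDerivAt f
      ((ContinuousLinearMap.smulRight (1 : ℂ →L[ℂ] ℂ) d).restrictScalars ℝ) z :=
    hf.hasFDerivAt.restrictScalars ℝ
  have hfd := hF.fderiv
  have hx : dxDeriv n f z = d := by simp [dxDeriv, hfd]
  have hy : dyDeriv n f z = Complex.I • d := by simp [dyDeriv, hfd]
  constructor
  · rw [wirtingerZ, hx, hy, smul_smul, Complex.I_mul_I]
    module
  · rw [wirtingerZBar, hx, hy, smul_smul, Complex.I_mul_I]
    module

lemma hasDerivAt_mono (c : ℂ) (m : ℕ) (z₀ : ℂ) (ζ : EuclideanSpace ℂ (Fin n)) (z : ℂ) :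
    HasDerivAt (fun z : ℂ => (c * (z - z₀) ^ m) • ζ)
      ((c * m * (z - z₀) ^ (m - 1)) • ζ) z := by
  have h2 : HasDerivAt (fun z : ℂ => z - z₀) 1 z := (hasDerivAt_id z).sub_const z₀
  have h1 : HasDerivAt (fun z : ℂ => (z - z₀) ^ m) ((m : ℂ) * (z - z₀) ^ (m - 1)) z := by
    exact (h2.pow m).congr_deriv (mul_one _)
  simpa [mul_assoc] using (h1.const_mul c).smul_const ζ

lemma iterZ_mono (c : ℂ) (m : ℕ) (z₀ : ℂ) (ζ : EuclideanSpace ℂ (Fin n)) (a : ℕ) :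
    (wirtingerZ n)^[a] (fun z : ℂ => (c * (z - z₀) ^ m) • ζ)
      = fun z : ℂ => ((c * (m.descFactorial a : ℂ)) * (z - z₀) ^ (m - a)) • ζ := by
  induction a with
  | zero => simp
  | succ a ih =>
    rw [Function.iterate_succ_apply', ih]
    funext z
    rw [(wirtinger_of_hasDerivAt
      (hasDerivAt_mono (c * (m.descFactorial a : ℂ)) (m - a) z₀ ζ z)).1,
      show m - a - 1 = m - (a + 1) from Nat.sub_sub m a 1,
      Nat.descFactorial_succ]
    congr 1
    push_cast
    ring

lemma wirtingerZBar_zero : wirtingerZBar n (fun _ => 0) = fun _ => 0 := by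
  funext z
  exact (wirtinger_of_hasDerivAt (hasDerivAt_const z (0 : EuclideanSpace ℂ (Fin n)))).2

lemma wirtingerZ_zero : wirtingerZ n (fun _ => 0) = fun _ => 0 := by
  funext z
  exact (wirtinger_of_hasDerivAt (hasDerivAt_const z (0 : EuclideanSpace ℂ (Fin n)))).1

end auxLemmas

/-- Full form of the crucial observation: the explicit polynomial
`h z = (w / (k! ‖ζ‖²)) (z - z₀)^k • ζ` (with `ζ ≠ 0`) is annihilated by `∂_z̄`
(so every mixed Wirtinger derivative with at least one `∂_z̄` vanishes identically),
its pure `∂_z`-derivatives at `z₀` vanish except in order exactly `k`, where the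
value is `(w/‖ζ‖²) • ζ`; consequently `h` solves `Q(∂_z, ∂_z̄) h (z₀) = w` for any
vector-valued polynomial differential operator `Q` whose coefficient of `∂_z^k` is `ζ`. -/
theorem stmt1 (n k : ℕ) (hn : 1 ≤ n) (hk : 1 ≤ k) (z₀ w : ℂ)
    (ζ : EuclideanSpace ℂ (Fin n)) (hζ : ζ ≠ 0)
    (h : ℂ → EuclideanSpace ℂ (Fin n))
    (hdef : ∀ z : ℂ,
      h z = ((w / ((k.factorial : ℂ) * (‖ζ‖ : ℂ) ^ 2)) * (z - z₀) ^ k) • ζ) :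
    (∀ z : ℂ, wirtingerZBar n h z = 0) ∧
    (∀ a b : ℕ, 1 ≤ b → ∀ z : ℂ, wirtingerMixed n a b h z = 0) ∧
    (∀ a : ℕ, a ≠ k → wirtingerMixed n a 0 h z₀ = 0) ∧
    wirtingerMixed n k 0 h z₀ = (w / (‖ζ‖ : ℂ) ^ 2) • ζ ∧
    (∀ q : ℕ × ℕ →₀ EuclideanSpace ℂ (Fin n), q (k, 0) = ζ →
      (q.sum fun ab v => (inner ℂ v (wirtingerMixed n ab.1 ab.2 h z₀) : ℂ)) = w) := by
  have hζn : (‖ζ‖ : ℂ) ≠ 0 := by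
    simp [norm_eq_zero, hζ]
  have hkf : (k.factorial : ℂ) ≠ 0 := by
    exact_mod_cast Nat.factorial_ne_zero k
  set c : ℂ := w / ((k.factorial : ℂ) * (‖ζ‖ : ℂ) ^ 2) with hc
  have hh : h = fun z : ℂ => (c * (z - z₀) ^ k) • ζ := funext hdef
  have hbar : ∀ z : ℂ, wirtingerZBar n h z = 0 := by
    intro z
    rw [hh]
    exact (wirtinger_of_hasDerivAt (hasDerivAt_mono c k z₀ ζ z)).2
  have hbarfun : wirtingerZBar n h = fun _ => 0 := funext hbar
  have hmixed0 : ∀ a b : ℕ, 1 ≤ b → ∀ z : ℂ, wirtingerMixed n a b h z = 0 := by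
    intro a b hb z
    obtain ⟨b', rfl⟩ := Nat.exists_eq_add_of_le hb
    have hZb : (wirtingerZBar n)^[1 + b'] h = fun _ => 0 := by
      rw [add_comm, Function.iterate_succ_apply, hbarfun,
        Function.iterate_fixed wirtingerZBar_zero]
    rw [wirtingerMixed, hZb, Function.iterate_fixed wirtingerZ_zero]
  have hpure : ∀ a : ℕ, wirtingerMixed n a 0 h z₀
      = ((c * (k.descFactorial a : ℂ)) * (0 : ℂ) ^ (k - a)) • ζ := by
    intro a
    rw [wirtingerMixed, Function.iterate_zero_apply, hh, iterZ_mono]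
    simp
  have hck : c * (k.factorial : ℂ) = w / (‖ζ‖ : ℂ) ^ 2 := by
    rw [hc]
    field_simp
  have hpk : wirtingerMixed n k 0 h z₀ = (w / (‖ζ‖ : ℂ) ^ 2) • ζ := by
    rw [hpure k]
    simp [Nat.descFactorial_self, hck]
  have hpne : ∀ a : ℕ, a ≠ k → wirtingerMixed n a 0 h z₀ = 0 := by
    intro a ha
    rw [hpure a]
    rcases lt_or_gt_of_ne ha with hlt | hgt
    · have : k - a ≠ 0 := Nat.sub_ne_zero_of_lt hlt
      rw [zero_pow this]
      simp
    · have : k.descFactorial a = 0 := Nat.descFactorial_eq_zero_iff_lt.mpr hgt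
      rw [this]
      simp
  refine ⟨hbar, hmixed0, hpne, hpk, ?_⟩
  intro q hq
  have hmem : (k, 0) ∈ q.support := by
    rw [Finsupp.mem_support_iff, hq]; exact hζ
  rw [Finsupp.sum, Finset.sum_eq_single (k, 0)]
  · rw [hq, hpk, inner_smul_right, inner_self_eq_norm_sq_to_K]
    field_simp
    rfl
  · intro ab _ hab
    rcases Nat.eq_zero_or_pos ab.2 with h2 | h2
    · have h1 : ab.1 ≠ k := by
        intro he
        exact hab (Prod.ext he h2)
      rw [show ab.2 = 0 from h2, hpne ab.1 h1, inner_zero_right]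
    · rw [hmixed0 ab.1 ab.2 h2, inner_zero_right]
  · intro habs
    exact absurd hmem habs
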